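/- If |φ^T θ̂| > M, then (φ^T θ̃)² ≤ (φ^T θ̃) · |φ^T θ̂| · z̃, and moreover (φ^T θ̃) · |φ^T θ̂| · z̃ ≥ |φ^T θ̃| · (|φ^T θ̂| + M). -/

import Mathlib

/-- If `|φᵀθ̂| > M`, then `(φᵀθ̃)² ≤ (φᵀθ̃)·|φᵀθ̂|·z̃`, and moreover
`(φᵀθ̃)·|φᵀθ̂|·z̃ ≥ |φᵀθ̃|·(|φᵀθ̂| + M)`. -/
theorem rpfi_cutoff_inequality
    {n : ℕ} (hn : 1 ≤ n)
    (φbar θbar : ℝ) (hφbar : 0 < φbar) (hθbar : 0 < θbar)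
    (M : ℝ) (hM : M = φbar * θbar + 2)
    (φ θhat θ : EuclideanSpace ℝ (Fin n)) (hφ : ‖φ‖ ≤ φbar) (hθ : ‖θ‖ ≤ θbar)
    (z : ℝ)
    (hz : z = max (-M) (min M (inner ℝ φ θhat : ℝ)))
    (θtil : EuclideanSpace ℝ (Fin n)) (hθtil : θtil = θhat - θ)
    (ztil : ℝ) (hztil : ztil = z - (inner ℝ φ θ : ℝ))
    (hbig : M < |(inner ℝ φ θhat : ℝ)|) :
    (inner ℝ φ θtil : ℝ) ^ 2 ≤ (inner ℝ φ θtil : ℝ) * |(inner ℝ φ θhat : ℝ)| * ztil ∧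
      |(inner ℝ φ θtil : ℝ)| * (|(inner ℝ φ θhat : ℝ)| + M) ≤
        (inner ℝ φ θtil : ℝ) * |(inner ℝ φ θhat : ℝ)| * ztil := by
  set a : ℝ := (inner ℝ φ θhat : ℝ) with ha
  set b : ℝ := (inner ℝ φ θ : ℝ) with hb
  have hin : (inner ℝ φ θtil : ℝ) = a - b := by
    rw [hθtil, inner_sub_right]
  have hbb : |b| ≤ M - 2 := by
    have h1 : |b| ≤ ‖φ‖ * ‖θ‖ := abs_real_inner_le_norm φ θ
    have h2 : ‖φ‖ * ‖θ‖ ≤ φbar * θbar := by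
      apply mul_le_mul hφ hθ (norm_nonneg _) hφbar.le
    linarith [hM]
  have hb1 : b ≤ M - 2 := (abs_le.mp hbb).2
  have hb2 : -(M - 2) ≤ b := (abs_le.mp hbb).1
  rcases lt_abs.mp hbig with hpos | hneg
  · -- a > M
    have haM : M < a := hpos
    have habs : |a| = a := abs_of_pos (by linarith)
    have hzz : z = M := by
      rw [hz, min_eq_left haM.le, max_eq_right (by linarith)]
    have hzt : ztil = M - b := by rw [hztil, hzz]
    have key : |a - b| * (|a| + M) ≤ (a - b) * |a| * ztil := by
      rw [habs, hzt, abs_of_pos (by linarith : (0:ℝ) < a - b)]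
      nlinarith [mul_nonneg (mul_nonneg (show (0:ℝ) ≤ a - b by linarith) (show (0:ℝ) ≤ a by linarith)) (show (0:ℝ) ≤ M - b - 2 by linarith),
        mul_nonneg (show (0:ℝ) ≤ a - b by linarith) (show (0:ℝ) ≤ a - M by linarith)]
    refine ⟨?_, by rw [hin]; exact key⟩
    rw [hin]
    have h3 : (a - b) ^ 2 ≤ |a - b| * (|a| + M) := by
      have : (a - b)^2 = |a - b| * |a - b| := by rw [← abs_mul, abs_of_nonneg (mul_self_nonneg _), sq]
      rw [this]
      apply mul_le_mul_of_nonneg_left _ (abs_nonneg _)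
      calc |a - b| ≤ |a| + |b| := abs_sub _ _
        _ ≤ |a| + M := by linarith
    linarith [key]
  · -- a < -M
    have haM : a < -M := by linarith
    have habs : |a| = -a := abs_of_neg (by linarith)
    have hzz : z = -M := by
      rw [hz, min_eq_right (by linarith), max_eq_left (by linarith)]
    have hzt : ztil = -M - b := by rw [hztil, hzz]
    have key : |a - b| * (|a| + M) ≤ (a - b) * |a| * ztil := by
      rw [habs, hzt, abs_of_neg (by linarith : a - b < 0)]
      nlinarith [mul_nonneg (mul_nonneg (show (0:ℝ) ≤ b - a by linarith) (show (0:ℝ) ≤ -a by linarith)) (show (0:ℝ) ≤ M + b - 2 by linarith),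
        mul_nonneg (show (0:ℝ) ≤ b - a by linarith) (show (0:ℝ) ≤ -a - M by linarith)]
    refine ⟨?_, by rw [hin]; exact key⟩
    rw [hin]
    have h3 : (a - b) ^ 2 ≤ |a - b| * (|a| + M) := by
      have : (a - b)^2 = |a - b| * |a - b| := by rw [← abs_mul, abs_of_nonneg (mul_self_nonneg _), sq]
      rw [this]
      apply mul_le_mul_of_nonneg_left _ (abs_nonneg _)
      calc |a - b| ≤ |a| + |b| := abs_sub _ _
        _ ≤ |a| + M := by linarith
    linarith [key]
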